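/- Let G be a connected graph on n vertices with a cut clique K_r, i.e., an r-vertex clique whose removal disconnects G. Then α(G) ≤ r, and equality holds if and only if d_G(K_r) = r(n−r), i.e., every vertex of the clique is adjacent to every vertex outside the clique. -/

import Mathlib

open Matrix

attribute [local instance] Classical.propDecidable

/-- The Laplacian matrix `L(G) = D(G) - A(G)` of a simple graph, over `ℝ`. -/
noncomputable def lapMat {V : Type*} [Fintype V] (G : SimpleGraph V) : Matrix V V ℝ :=
  fun u w =>
    (if u = w then ∑ x : V, (if G.Adj u x then (1 : ℝ) else 0) else 0)
      - (if G.Adj u w then (1 : ℝ) else 0)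

/-- The smallest eigenvalue of a symmetric real matrix, as the infimum of Rayleigh quotients. -/
noncomputable def lambdaMin {m : Type*} [Fintype m] (M : Matrix m m ℝ) : ℝ :=
  sInf {t : ℝ | ∃ x : m → ℝ, x ≠ 0 ∧ (x ⬝ᵥ (M *ᵥ x)) / (x ⬝ᵥ x) = t}

/-- The algebraic connectivity `α(G)`: the second smallest Laplacian eigenvalue, characterized
as the minimum Rayleigh quotient over nonzero vectors orthogonal to the all-ones vector. -/
noncomputable def algConn {V : Type*} [Fintype V] (G : SimpleGraph V) : ℝ :=
  sInf {t : ℝ | ∃ x : V → ℝ, x ≠ 0 ∧ (∑ v, x v) = 0 ∧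
    (x ⬝ᵥ ((lapMat G) *ᵥ x)) / (x ⬝ᵥ x) = t}

/-- A Fiedler vector: an eigenvector of `L(G)` for the eigenvalue `α(G)`. -/
noncomputable def IsFiedlerVector {V : Type*} [Fintype V] (G : SimpleGraph V) (x : V → ℝ) : Prop :=
  x ≠ 0 ∧ (lapMat G) *ᵥ x = algConn G • x

/-- The `k`-token graph of `G`: vertices are the `k`-subsets of the vertex set, two subsets
being adjacent iff their symmetric difference is a pair `{u, v}` with `uv` an edge of `G`. -/
def tokenGraph {V : Type*} [DecidableEq V] (G : SimpleGraph V) (k : ℕ) :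
    SimpleGraph {A : Finset V // A.card = k} where
  Adj A B := ∃ u v : V, G.Adj u v ∧ symmDiff A.val B.val = {u, v}
  symm := by
    constructor
    rintro A B ⟨u, v, h, hs⟩
    exact ⟨u, v, h, by rwa [symmDiff_comm]⟩
  loopless := by
    constructor
    rintro A ⟨u, v, h, hs⟩
    rw [symmDiff_self] at hs
    have : u ∈ (⊥ : Finset V) := hs ▸ Finset.mem_insert_self u {v}
    simp at this

/-- Adding the edge `uv` to `G`. -/
def addEdge {V : Type*} (G : SimpleGraph V) (u v : V) : SimpleGraph V :=
  G ⊔ SimpleGraph.fromEdgeSet {s(u, v)}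

/-- Degree of a vertex. -/
noncomputable def deg {V : Type*} [Fintype V] (G : SimpleGraph V) (u : V) : ℕ :=
  (Finset.univ.filter (fun w => G.Adj u w)).card

/-- The smallest eigenvalue of the principal submatrix of `M` with rows and columns in `S`. -/
noncomputable def principalMin {V : Type*} [Fintype V] (M : Matrix V V ℝ) (S : Finset V) : ℝ :=
  lambdaMin (M.submatrix (fun a : {x // x ∈ S} => (a : V)) (fun a : {x // x ∈ S} => (a : V)))

/-- The cycle on `Fin n` (for `n ≥ 3`), `i` adjacent to `i ± 1 (mod n)`. -/
def cyc (n : ℕ) : SimpleGraph (Fin n) :=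
  SimpleGraph.fromRel (fun i j => (i.val + 1) % n = j.val)

/-- The kite graph `K(H,T)` with head `H`, root `v`, and tail formed by `s` paths of length `r`:
`Sum.inr (i, j)` is the vertex `v_{(i+1)(j+1)}`, the `(j+1)`-st vertex of the `(i+1)`-st path
(so the first path corresponds to `i = 0` and the path vertices adjacent to `v` have `j = 0`). -/
def kite {W : Type*} (H : SimpleGraph W) (v : W) (s r : ℕ) :
    SimpleGraph (W ⊕ Fin s × Fin r) :=
  SimpleGraph.fromRel (fun a b =>
    match a, b with
    | Sum.inl x, Sum.inl y => H.Adj x y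
    | Sum.inl x, Sum.inr (_, j) => x = v ∧ j.val = 0
    | Sum.inr (i, j), Sum.inr (i', j') => i = i' ∧ j.val + 1 = j'.val
    | _, _ => False)

section helpers
variable {V : Type*} [Fintype V]

lemma sum_sq_pairs (F : Finset V) (x : V → ℝ) :
    ∑ u ∈ F, ∑ w ∈ F, (x u - x w)^2
      = 2*(F.card : ℝ)*(∑ u ∈ F, (x u)^2) - 2*(∑ u ∈ F, x u)^2 := by
  have h : ∀ u ∈ F, ∑ w ∈ F, (x u - x w)^2
      = (F.card : ℝ) * (x u)^2 - 2 * x u * (∑ w ∈ F, x w) + ∑ w ∈ F, (x w)^2 := by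
    intro u _
    have e : ∀ w ∈ F, (x u - x w)^2 = (x u)^2 - 2 * x u * x w + (x w)^2 := by
      intro w _; ring
    rw [Finset.sum_congr rfl e, Finset.sum_add_distrib, Finset.sum_sub_distrib,
      Finset.sum_const, nsmul_eq_mul, ← Finset.mul_sum]
  have h3 : ∑ u ∈ F, 2 * x u * (∑ w ∈ F, x w) = 2 * (∑ u ∈ F, x u)^2 := by
    rw [← Finset.sum_mul, ← Finset.mul_sum]; ring
  rw [Finset.sum_congr rfl h, Finset.sum_add_distrib, Finset.sum_sub_distrib, h3,
    Finset.sum_const, nsmul_eq_mul, ← Finset.mul_sum]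
  ring

lemma dot_lap (G : SimpleGraph V) (x : V → ℝ) :
    x ⬝ᵥ (lapMat G *ᵥ x) =
      (1/2) * ∑ u, ∑ w, (if G.Adj u w then (x u - x w)^2 else 0) := by
  classical
  have hsym : ∀ (f : V → V → ℝ), ∑ u, ∑ w, (if G.Adj u w then f u w else 0)
      = ∑ u, ∑ w, (if G.Adj u w then f w u else 0) := by
    intro f
    rw [Finset.sum_comm]
    apply Finset.sum_congr rfl; intro u _
    apply Finset.sum_congr rfl; intro w _
    by_cases h : G.Adj u w
    · rw [if_pos h, if_pos h.symm]
    · rw [if_neg h, if_neg (fun h' => h h'.symm)]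
  have expand : ∀ u w : V, (if G.Adj u w then (x u - x w)^2 else 0)
      = (if G.Adj u w then (x u)^2 else 0) + (if G.Adj u w then (x w)^2 else 0)
        - 2 * (if G.Adj u w then x u * x w else 0) := by
    intro u w
    by_cases h : G.Adj u w
    · simp [h]; ring
    · simp [h]
  have lhs : x ⬝ᵥ (lapMat G *ᵥ x)
      = ∑ u, ((∑ t, (if G.Adj u t then (1:ℝ) else 0)) * (x u)^2)
        - ∑ u, ∑ w, (if G.Adj u w then x u * x w else 0) := by
    simp only [dotProduct, mulVec, lapMat, dotProduct, sub_mul, mul_sub, Finset.mul_sum,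
      Finset.sum_sub_distrib]
    congr 1
    · apply Finset.sum_congr rfl; intro u _
      rw [Finset.sum_eq_single u]
      · simp; ring
      · intro w _ hw; rw [if_neg (Ne.symm hw)]; ring
      · simp
    · apply Finset.sum_congr rfl; intro u _
      apply Finset.sum_congr rfl; intro w _
      by_cases h : G.Adj u w
      · simp [h]
      · simp [h]
  have deg_eq : ∀ u : V, ∑ w, (if G.Adj u w then (x u)^2 else 0)
      = (∑ t, (if G.Adj u t then (1:ℝ) else 0)) * (x u)^2 := by
    intro u
    rw [Finset.sum_mul]
    apply Finset.sum_congr rfl; intro w _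
    by_cases h : G.Adj u w <;> simp [h]
  rw [lhs]
  simp only [expand, Finset.sum_add_distrib, Finset.sum_sub_distrib]
  rw [← hsym (fun u w => (x u)^2)]
  simp only [deg_eq]
  rw [← Finset.sum_sub_distrib]
  simp only [← Finset.mul_sum, Finset.sum_sub_distrib]
  ring

lemma dot_lap_nonneg (G : SimpleGraph V) (x : V → ℝ) : 0 ≤ x ⬝ᵥ (lapMat G *ᵥ x) := by
  rw [dot_lap]
  apply mul_nonneg (by norm_num)
  apply Finset.sum_nonneg; intro u _
  apply Finset.sum_nonneg; intro w _
  split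
  · positivity
  · exact le_refl 0

lemma dot_self_eq (x : V → ℝ) : x ⬝ᵥ x = ∑ v, (x v)^2 := by
  simp [dotProduct, sq]

lemma dot_self_pos {x : V → ℝ} (hx : x ≠ 0) : 0 < x ⬝ᵥ x := by
  rw [dot_self_eq]
  obtain ⟨v, hv⟩ := Function.ne_iff.1 hx
  exact Finset.sum_pos' (fun w _ => sq_nonneg _)
    ⟨v, Finset.mem_univ v, lt_of_le_of_ne (sq_nonneg _) (Ne.symm (pow_ne_zero 2 hv))⟩

lemma algConn_le_rayleigh (G : SimpleGraph V) (x : V → ℝ) (hx : x ≠ 0)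
    (hs : ∑ v, x v = 0) :
    algConn G ≤ (x ⬝ᵥ (lapMat G *ᵥ x)) / (x ⬝ᵥ x) := by
  apply csInf_le
  · refine ⟨0, ?_⟩
    rintro t ⟨y, hy, _, rfl⟩
    exact div_nonneg (dot_lap_nonneg G y) (dot_self_pos hy).le
  · exact ⟨x, hx, hs, rfl⟩

lemma le_algConn (G : SimpleGraph V) (c : ℝ)
    (hne : ∃ x : V → ℝ, x ≠ 0 ∧ ∑ v, x v = 0)
    (h : ∀ x : V → ℝ, x ≠ 0 → ∑ v, x v = 0 → c * (x ⬝ᵥ x) ≤ x ⬝ᵥ (lapMat G *ᵥ x)) :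
    c ≤ algConn G := by
  obtain ⟨x₀, h1, h2⟩ := hne
  refine le_csInf ⟨(x₀ ⬝ᵥ (lapMat G *ᵥ x₀)) / (x₀ ⬝ᵥ x₀), ⟨x₀, h1, h2, rfl⟩⟩ ?_
  rintro t ⟨y, hy, hys, rfl⟩
  rw [le_div_iff₀ (dot_self_pos hy)]
  exact h y hy hys

end helpers

set_option maxHeartbeats 1600000 in
/-- Let `G` be a connected graph on `n` vertices with a cut clique `K` on
`r` vertices (a clique whose removal disconnects `G`). Then `α(G) ≤ r`, with equality iff
every vertex of the clique is adjacent to every vertex outside the clique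
(i.e. `d_G(K_r) = r(n - r)`). -/
theorem stmt17 {V : Type*} [Fintype V] [DecidableEq V] (G : SimpleGraph V)
    (hconn : G.Connected)
    (K : Finset V) (r : ℕ) (hcard : K.card = r)
    (hclique : ∀ a ∈ K, ∀ b ∈ K, a ≠ b → G.Adj a b)
    (hcut : ¬ (G.induce ((↑K : Set V)ᶜ)).Preconnected) :
    algConn G ≤ r ∧ (algConn G = r ↔ ∀ a ∈ K, ∀ b ∉ K, G.Adj a b) := by
  classical
  set S : Set V := (↑K : Set V)ᶜ with hSdef
  rw [SimpleGraph.Preconnected] at hcut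
  push_neg at hcut
  obtain ⟨u₀, v₀, hnr⟩ := hcut
  have hmemS : ∀ w : V, w ∈ S ↔ w ∉ K := by intro w; simp [hSdef]
  set pA : V → Prop := fun w => ∃ h : w ∈ S, (G.induce S).Reachable u₀ ⟨w, h⟩ with hpAdef
  set A : Finset V := Finset.univ.filter pA with hAdef
  set B : Finset V := Finset.univ.filter (fun w => w ∉ K ∧ ¬ pA w) with hBdef
  have hA_mem : ∀ w, w ∈ A ↔ pA w := by intro w; simp [hAdef]
  have hB_mem : ∀ w, w ∈ B ↔ (w ∉ K ∧ ¬ pA w) := by intro w; simp [hBdef]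
  have hAnotK : ∀ w ∈ A, w ∉ K := by
    intro w hw
    obtain ⟨h, -⟩ := (hA_mem w).1 hw
    exact (hmemS w).1 h
  have hu₀A : (u₀ : V) ∈ A := by
    refine (hA_mem _).2 ⟨u₀.2, ?_⟩
    rw [Subtype.coe_eta]
  have hv₀B : (v₀ : V) ∈ B := by
    refine (hB_mem _).2 ⟨(hmemS _).1 v₀.2, fun hp => ?_⟩
    obtain ⟨h, hr⟩ := hp
    rw [Subtype.coe_eta] at hr
    exact hnr hr
  have step : ∀ u w : V, w ∉ K → G.Adj u w → pA u → pA w := by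
    rintro u w hwK hadj ⟨hu, hr⟩
    have hwS : w ∈ S := (hmemS w).2 hwK
    exact ⟨hwS, hr.trans (SimpleGraph.Adj.reachable (by exact hadj))⟩
  have hAB_same : ∀ u w : V, u ∉ K → w ∉ K → G.Adj u w → (pA u ↔ pA w) :=
    fun u w hu hw hadj => ⟨step u w hw hadj, step w u hu hadj.symm⟩
  set a : ℝ := (A.card : ℝ) with hadef
  set b : ℝ := (B.card : ℝ) with hbdef
  set x : V → ℝ := fun v => if v ∈ A then b else if v ∈ B then -a else 0 with hxdef
  have hApos : (0:ℝ) < a := by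
    have h := Finset.card_pos.2 ⟨_, hu₀A⟩
    rw [hadef]
    exact_mod_cast h
  have hBpos : (0:ℝ) < b := by
    have h := Finset.card_pos.2 ⟨_, hv₀B⟩
    rw [hbdef]
    exact_mod_cast h
  have hAB_disj : ∀ v, v ∈ A → v ∉ B := fun v hv hv' => ((hB_mem v).1 hv').2 ((hA_mem v).1 hv)
  have hxA : ∀ v ∈ A, x v = b := fun v hv => if_pos hv
  have hxB : ∀ v ∈ B, x v = -a := by
    intro v hv
    rw [hxdef]
    simp only
    rw [if_neg (fun h => hAB_disj v h hv), if_pos hv]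
  have hxK : ∀ v ∈ K, x v = 0 := by
    intro v hv
    rw [hxdef]
    simp only
    rw [if_neg (fun h => hAnotK v h hv), if_neg (fun h => ((hB_mem v).1 h).1 hv)]
  have hxO : ∀ v, v ∉ A → v ∉ B → x v = 0 := by
    intro v h1 h2
    rw [hxdef]
    simp only
    rw [if_neg h1, if_neg h2]
  have hx0 : ∀ v, v ∉ K → v ∉ A → v ∈ B :=
    fun v h1 h2 => (hB_mem v).2 ⟨h1, fun hp => h2 ((hA_mem v).2 hp)⟩
  have hind : ∀ (F : Finset V), ∑ v, (if v ∈ F then (1:ℝ) else 0) = F.card := by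
    intro F
    rw [Finset.sum_ite_mem, Finset.univ_inter, Finset.sum_const, nsmul_eq_mul, mul_one]
  have hxsum : ∑ v, x v = 0 := by
    have e : ∀ v : V, x v = b * (if v ∈ A then (1:ℝ) else 0) + (-a) * (if v ∈ B then 1 else 0) := by
      intro v
      by_cases h1 : v ∈ A
      · simp [hxA v h1, h1, hAB_disj v h1]
      · by_cases h2 : v ∈ B
        · simp [hxB v h2, h1, h2]
        · simp [hxO v h1 h2, h1, h2]
    rw [Finset.sum_congr rfl (fun v _ => e v), Finset.sum_add_distrib, ← Finset.mul_sum,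
      ← Finset.mul_sum, hind A, hind B, ← hadef, ← hbdef]
    ring
  have hxsq : ∑ v, (x v)^2 = a * b^2 + b * a^2 := by
    have e : ∀ v : V, (x v)^2
        = b^2 * (if v ∈ A then (1:ℝ) else 0) + a^2 * (if v ∈ B then 1 else 0) := by
      intro v
      by_cases h1 : v ∈ A
      · simp [hxA v h1, h1, hAB_disj v h1]
      · by_cases h2 : v ∈ B
        · simp [hxB v h2, h1, h2]
        · simp [hxO v h1 h2, h1, h2]
    rw [Finset.sum_congr rfl (fun v _ => e v), Finset.sum_add_distrib, ← Finset.mul_sum,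
      ← Finset.mul_sum, hind A, hind B, ← hadef, ← hbdef]
    ring
  have hT : x ⬝ᵥ x = a * b^2 + b * a^2 := by rw [dot_self_eq, hxsq]
  have hTpos : (0:ℝ) < x ⬝ᵥ x := by
    rw [hT]
    nlinarith [hApos, hBpos, mul_pos hApos (mul_pos hBpos hBpos), mul_pos hBpos (mul_pos hApos hApos)]
  have hx_ne : x ≠ 0 := by
    intro h
    have h0 := congrFun h (u₀ : V)
    rw [hxA _ hu₀A, Pi.zero_apply] at h0
    exact (ne_of_gt hBpos) h0
  -- row bounds
  have rowK : ∀ u ∈ K, ∑ w, (if G.Adj u w then (x u - x w)^2 else 0) ≤ x ⬝ᵥ x := by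
    intro u hu
    rw [dot_self_eq]
    apply Finset.sum_le_sum
    intro w _
    rw [hxK u hu]
    split
    · apply le_of_eq; ring
    · exact sq_nonneg _
  have rowNK : ∀ u, u ∉ K → ∑ w, (if G.Adj u w then (x u - x w)^2 else 0)
      ≤ (r:ℝ) * (x u)^2 := by
    intro u hu
    calc ∑ w, (if G.Adj u w then (x u - x w)^2 else 0)
        ≤ ∑ w, (if w ∈ K then (x u)^2 else 0) := by
          apply Finset.sum_le_sum
          intro w _
          by_cases hw : w ∈ K
          · rw [if_pos hw, hxK w hw]
            split
            · apply le_of_eq; ring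
            · exact sq_nonneg _
          · rw [if_neg hw]
            split
            · rename_i hadj
              have hiff := hAB_same u w hu hw hadj
              have : x u = x w := by
                by_cases hA' : u ∈ A
                · have : w ∈ A := (hA_mem w).2 (hiff.1 ((hA_mem u).1 hA'))
                  rw [hxA u hA', hxA w this]
                · have huB : u ∈ B := hx0 u hu hA'
                  have hwA : w ∉ A := fun hwA => hA' ((hA_mem u).2 (hiff.2 ((hA_mem w).1 hwA)))
                  have hwB : w ∈ B := hx0 w hw hwA
                  rw [hxB u huB, hxB w hwB]
              rw [this, sub_self]
              simp
            · exact le_refl 0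
    _ = (r:ℝ) * (x u)^2 := by
          rw [Finset.sum_ite_mem, Finset.univ_inter, Finset.sum_const, nsmul_eq_mul, hcard]
  have hgsum : ∑ u, (if u ∈ K then x ⬝ᵥ x else (r:ℝ) * (x u)^2) = 2 * r * (x ⬝ᵥ x) := by
    have e : ∀ u : V, (if u ∈ K then x ⬝ᵥ x else (r:ℝ) * (x u)^2)
        = (if u ∈ K then x ⬝ᵥ x else 0) + (r:ℝ) * (x u)^2 := by
      intro u
      by_cases hu : u ∈ K
      · rw [if_pos hu, if_pos hu, hxK u hu]; ring
      · rw [if_neg hu, if_neg hu]; ring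
    rw [Finset.sum_congr rfl (fun u _ => e u), Finset.sum_add_distrib, Finset.sum_ite_mem,
      Finset.univ_inter, Finset.sum_const, nsmul_eq_mul, ← Finset.mul_sum, ← dot_self_eq,
      hcard]
    ring
  have rowAll : ∀ u : V, ∑ w, (if G.Adj u w then (x u - x w)^2 else 0)
      ≤ (if u ∈ K then x ⬝ᵥ x else (r:ℝ) * (x u)^2) := by
    intro u
    by_cases hu : u ∈ K
    · rw [if_pos hu]; exact rowK u hu
    · rw [if_neg hu]; exact rowNK u hu
  have hQ : x ⬝ᵥ (lapMat G *ᵥ x) ≤ (r:ℝ) * (x ⬝ᵥ x) := by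
    rw [dot_lap]
    have h1 := Finset.sum_le_sum (fun u (_ : u ∈ Finset.univ) => rowAll u)
    rw [hgsum] at h1
    linarith
  have part1 : algConn G ≤ (r:ℝ) := by
    refine le_trans (algConn_le_rayleigh G x hx_ne hxsum) ?_
    rw [div_le_iff₀ hTpos]
    exact hQ
  refine ⟨part1, ?_, ?_⟩
  · -- equality implies full adjacency
    intro heq
    by_contra hne'
    push_neg at hne'
    obtain ⟨a₀, ha₀, b₀, hb₀, hnadj⟩ := hne'
    have hxb₀ : (0:ℝ) < (x b₀)^2 := by
      by_cases hA' : b₀ ∈ A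
      · rw [hxA b₀ hA']; nlinarith [hBpos]
      · rw [hxB b₀ (hx0 b₀ hb₀ hA')]; nlinarith [hApos]
    have rowStrict : ∑ w, (if G.Adj a₀ w then (x a₀ - x w)^2 else 0)
        ≤ x ⬝ᵥ x - (x b₀)^2 := by
      rw [dot_self_eq]
      have hTid : ∑ v, (x v)^2 = (x b₀)^2 + ∑ w ∈ Finset.univ.erase b₀, (x w)^2 :=
        (Finset.add_sum_erase _ _ (Finset.mem_univ b₀)).symm
      have hsplitL : ∑ w, (if G.Adj a₀ w then (x a₀ - x w)^2 else 0)
          = (if G.Adj a₀ b₀ then (x a₀ - x b₀)^2 else 0)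
            + ∑ w ∈ Finset.univ.erase b₀, (if G.Adj a₀ w then (x a₀ - x w)^2 else 0) :=
        (Finset.add_sum_erase _ _ (Finset.mem_univ b₀)).symm
      rw [if_neg hnadj] at hsplitL
      rw [hsplitL]
      have hrest : ∑ w ∈ Finset.univ.erase b₀, (if G.Adj a₀ w then (x a₀ - x w)^2 else 0)
          ≤ ∑ w ∈ Finset.univ.erase b₀, (x w)^2 := by
        apply Finset.sum_le_sum
        intro w _
        rw [hxK a₀ ha₀]
        split
        · apply le_of_eq; ring
        · exact sq_nonneg _
      linarith [hTid, hrest]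
    have strict : x ⬝ᵥ (lapMat G *ᵥ x) < (r:ℝ) * (x ⬝ᵥ x) := by
      rw [dot_lap]
      have hsplit : ∑ u, ∑ w, (if G.Adj u w then (x u - x w)^2 else 0)
          = (∑ w, (if G.Adj a₀ w then (x a₀ - x w)^2 else 0))
            + ∑ u ∈ Finset.univ.erase a₀, ∑ w, (if G.Adj u w then (x u - x w)^2 else 0) :=
        (Finset.add_sum_erase _ _ (Finset.mem_univ a₀)).symm
      have hrest : ∑ u ∈ Finset.univ.erase a₀, ∑ w, (if G.Adj u w then (x u - x w)^2 else 0)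
          ≤ ∑ u ∈ Finset.univ.erase a₀, (if u ∈ K then x ⬝ᵥ x else (r:ℝ) * (x u)^2) :=
        Finset.sum_le_sum (fun u _ => rowAll u)
      have hgsplit : ∑ u, (if u ∈ K then x ⬝ᵥ x else (r:ℝ) * (x u)^2)
          = (if a₀ ∈ K then x ⬝ᵥ x else (r:ℝ) * (x a₀)^2)
            + ∑ u ∈ Finset.univ.erase a₀, (if u ∈ K then x ⬝ᵥ x else (r:ℝ) * (x u)^2) :=
        (Finset.add_sum_erase _ _ (Finset.mem_univ a₀)).symm
      rw [if_pos ha₀] at hgsplit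
      rw [hgsum] at hgsplit
      rw [hsplit]
      have := rowStrict
      nlinarith [hxb₀]
    have : algConn G < (r:ℝ) := by
      refine lt_of_le_of_lt (algConn_le_rayleigh G x hx_ne hxsum) ?_
      rw [div_lt_iff₀ hTpos]
      exact strict
    exact absurd heq (ne_of_lt this)
  · -- full adjacency implies equality
    intro hfull
    refine le_antisymm part1 (le_algConn G r ⟨x, hx_ne, hxsum⟩ ?_)
    intro y hy hysum
    rw [dot_lap]
    set T' : ℝ := ∑ v, (y v)^2 with hT'def
    have hyT : y ⬝ᵥ y = T' := dot_self_eq y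
    set q : ℝ := ∑ v ∈ Kᶜ, y v with hqdef
    set QS : ℝ := ∑ v ∈ Kᶜ, (y v)^2 with hQSdef
    set P : ℝ := ∑ v ∈ K, (y v)^2 with hPdef
    set s : ℝ := ((Kᶜ : Finset V).card : ℝ) with hsdef
    clear_value T' q QS P s
    have key : ∀ u w : V, (y u - y w)^2 - (if u ∉ K ∧ w ∉ K then (y u - y w)^2 else 0)
        ≤ (if G.Adj u w then (y u - y w)^2 else 0) := by
      intro u w
      by_cases hc : u ∉ K ∧ w ∉ K
      · rw [if_pos hc, sub_self]
        split
        · exact sq_nonneg _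
        · exact le_refl 0
      · rw [if_neg hc, sub_zero]
        by_cases huw : u = w
        · subst huw
          simp only [sub_self]
          split <;> simp
        · have hadj : G.Adj u w := by
            rcases not_and_or.1 hc with h | h
            · push_neg at h
              by_cases hw : w ∈ K
              · exact hclique u h w hw huw
              · exact hfull u h w hw
            · push_neg at h
              by_cases hu : u ∈ K
              · exact hclique u hu w h huw
              · exact (hfull w h u hu).symm
          rw [if_pos hadj]
    have hsum1 : ∑ u, ∑ w, (y u - y w)^2 = 2 * (Fintype.card V : ℝ) * T' := by
      rw [sum_sq_pairs, hysum, Finset.card_univ, ← hT'def]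
      ring
    have hcompl : Finset.univ.filter (fun u : V => u ∉ K) = Kᶜ := by
      ext u; simp
    have hsum2 : ∑ u, ∑ w, (if u ∉ K ∧ w ∉ K then (y u - y w)^2 else 0)
        = 2 * s * QS - 2 * q^2 := by
      have e1 : ∀ u : V, ∑ w, (if u ∉ K ∧ w ∉ K then (y u - y w)^2 else 0)
          = (if u ∉ K then ∑ w ∈ Kᶜ, (y u - y w)^2 else 0) := by
        intro u
        by_cases hu : u ∉ K
        · rw [if_pos hu, ← hcompl, Finset.sum_filter]
          apply Finset.sum_congr rfl
          intro w _
          by_cases hw : w ∉ K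
          · rw [if_pos ⟨hu, hw⟩, if_pos hw]
          · rw [if_neg (fun h => hw h.2), if_neg hw]
        · rw [if_neg hu]
          apply Finset.sum_eq_zero
          intro w _
          rw [if_neg (fun h => hu h.1)]
      rw [Finset.sum_congr rfl (fun u _ => e1 u), ← Finset.sum_filter, hcompl,
        sum_sq_pairs, ← hsdef, ← hQSdef, ← hqdef]
    have hsumle : ∑ u, ∑ w, (y u - y w)^2 - ∑ u, ∑ w, (if u ∉ K ∧ w ∉ K then (y u - y w)^2 else 0)
        ≤ ∑ u, ∑ w, (if G.Adj u w then (y u - y w)^2 else 0) := by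
      rw [← Finset.sum_sub_distrib]
      apply Finset.sum_le_sum
      intro u _
      rw [← Finset.sum_sub_distrib]
      exact Finset.sum_le_sum (fun w _ => key u w)
    have hcards : (Fintype.card V : ℝ) = (r:ℝ) + s := by
      rw [hsdef, ← hcard]
      exact_mod_cast (Finset.card_add_card_compl K).symm
    have hTsplit : T' = P + QS := by
      rw [hT'def, hPdef, hQSdef, Finset.sum_add_sum_compl]
    have hPnn : 0 ≤ P := by
      rw [hPdef]; exact Finset.sum_nonneg (fun v _ => sq_nonneg _)
    have hsnn : 0 ≤ s := by rw [hsdef]; exact Nat.cast_nonneg _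
    rw [hyT]
    rw [hsum1, hsum2] at hsumle
    have hmain : (r:ℝ) * T' ≤ (Fintype.card V : ℝ) * T' - s * QS + q^2 := by
      rw [hcards, hTsplit]
      have h := add_nonneg (mul_nonneg hsnn hPnn) (sq_nonneg q)
      linarith only [h]
    linarith only [hsumle, hmain]
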